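/- Let G be a simple (undirected) graph of order n ≥ 3 in which the degree sum of any two non-adjacent vertices is at least n. Then G is Hamiltonian. -/

import Mathlib

set_option linter.unusedSectionVars false
set_option linter.unnecessarySimpa false
set_option linter.unusedVariables false
open List

section OreAux

variable {V : Type} [Fintype V] [DecidableEq V] (G : SimpleGraph V) [DecidableRel G.Adj]


/-- Build a walk from a chain of adjacencies. -/
def OreMkWalk : (a b : V) → (l : List V) → List.Chain G.Adj a (l ++ [b]) → G.Walk a b
  | _, _, [], h => SimpleGraph.Walk.cons (List.chain_cons.1 h).1 SimpleGraph.Walk.nil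
  | a, b, c :: l, h =>
      SimpleGraph.Walk.cons (List.chain_cons.1 h).1 (OreMkWalk c b l (List.chain_cons.1 h).2)

lemma OreMkWalk_support (a b : V) (l : List V) (h) :
    (OreMkWalk G a b l h).support = a :: (l ++ [b]) := by
  induction l generalizing a with
  | nil => simp [OreMkWalk]
  | cons c l ih => simp [OreMkWalk]; exact ih _ _

lemma OreMkWalk_length (a b : V) (l : List V) (h) :
    (OreMkWalk G a b l h).length = l.length + 1 := by
  have := congrArg List.length (OreMkWalk_support G a b l h)
  simpa [SimpleGraph.Walk.length_support] using this

lemma no_closing_edge {u v : V} (q : G.Walk u v) (hnd : q.support.Nodup)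
    (hlen : 2 ≤ q.length) : s(v, u) ∉ q.edges := by
  cases q with
  | nil => simp
  | @cons _ w _ h q' =>
    intro hmem
    simp only [SimpleGraph.Walk.support_cons, List.nodup_cons] at hnd
    rw [SimpleGraph.Walk.edges_cons] at hmem
    rcases List.mem_cons.1 hmem with heq | hmem'
    · rw [Sym2.eq_iff] at heq
      have hw : w = v := by rcases heq with ⟨h1, h2⟩ | ⟨h1, h2⟩ <;> simp_all
      subst hw
      have : q' = SimpleGraph.Walk.nil := by
        rw [← SimpleGraph.Walk.isPath_iff_eq_nil]
        exact SimpleGraph.Walk.IsPath.mk' hnd.2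
      subst this
      simp at hlen
    · exact hnd.1 (q'.snd_mem_support_of_mem_edges hmem')


/-- A nonempty list of distinct vertices forming a cycle. -/
def IsCycleList (c : List V) : Prop :=
  c ≠ [] ∧ c.Chain' G.Adj ∧ c.Nodup ∧
    ∀ x ∈ c.getLast?, ∀ y ∈ c.head?, G.Adj x y

lemma IsCycleList.rotate_one {c : List V} (h : IsCycleList G c) :
    IsCycleList G (c.rotate 1) := by
  obtain ⟨hne, hch, hnd, hcl⟩ := h
  match c with
  | [] => simp at hne
  | [a] => exact ⟨by simp, by simpa using hch, by simpa using hnd, by simpa using hcl⟩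
  | a :: b :: t =>
    have hrot : (a :: b :: t).rotate 1 = (b :: t) ++ [a] := by
      simp [List.rotate_cons_succ]
    rw [hrot]
    simp only [List.nodup_cons, List.mem_cons] at hnd
    refine ⟨by simp, ?_, ?_, ?_⟩
    · refine List.isChain_append.2 ⟨(List.isChain_cons.1 hch).2, List.isChain_singleton a, ?_⟩
      intro x hx y hy
      simp only [List.head?_cons, Option.mem_some_iff] at hy
      subst hy
      apply hcl
      · rwa [List.getLast?_cons_cons]
      · simp
    · rw [List.nodup_append]
      refine ⟨List.nodup_cons.2 ⟨fun hb => hnd.1 (by tauto), hnd.2.2⟩, by simp, ?_⟩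
      intro x hx
      simp only [List.mem_singleton]
      rintro _ rfl rfl
      exact hnd.1 (List.mem_cons.1 hx)
    · intro x hx y hy
      rw [List.getLast?_append_of_ne_nil _ (by simp)] at hx
      simp only [List.getLast?_singleton, Option.mem_some_iff] at hx
      subst hx
      have : ((b :: t) ++ [a]).head? = some b := by simp
      rw [this, Option.mem_some_iff] at hy
      subst hy
      exact (List.isChain_cons_cons.1 hch).1

lemma IsCycleList.rotate {c : List V} (h : IsCycleList G c) (n : ℕ) :
    IsCycleList G (c.rotate n) := by
  induction n with
  | zero => simpa using h
  | succ n ih =>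
    have : c.rotate (n + 1) = (c.rotate n).rotate 1 := by
      rw [List.rotate_rotate]
  -- (c.rotate n).rotate 1 = c.rotate (n+1)
    rw [this]
    exact ih.rotate_one G

lemma exists_rotation_getLast {c : List V} (h : IsCycleList G c) {w : V} (hw : w ∈ c) :
    ∃ c', IsCycleList G c' ∧ c' ~ c ∧ c'.getLast? = some w := by
  obtain ⟨l₁, l₂, rfl⟩ := List.append_of_mem hw
  refine ⟨(l₁ ++ w :: l₂).rotate (l₁.length + 1), h.rotate G _, List.rotate_perm _ _, ?_⟩
  rw [List.rotate_eq_drop_append_take (by simp)]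
  have htake : (l₁ ++ w :: l₂).take (l₁.length + 1) = l₁ ++ [w] := by
    rw [List.take_append]
    simp
  rw [htake]
  rcases eq_or_ne ((l₁ ++ w :: l₂).drop (l₁.length + 1)) [] with hd | hd
  · simp [hd]
  · rw [List.getLast?_append_of_ne_nil _ (by simp)]
    simp

lemma cycle_extend {c : List V} (h : IsCycleList G c) {v w : V}
    (hv : v ∉ c) (hw : w ∈ c) (ha : G.Adj v w) :
    ∃ l : List V, l.Chain' G.Adj ∧ l.Nodup ∧ l.length = c.length + 1 := by
  obtain ⟨c', hc', hperm, hlast⟩ := exists_rotation_getLast G h hw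
  refine ⟨c' ++ [v], ?_, ?_, by simp [hperm.length_eq]⟩
  · refine List.isChain_append.2 ⟨hc'.2.1, List.isChain_singleton v, ?_⟩
    intro x hx y hy
    rw [hlast, Option.mem_some_iff] at hx
    simp only [List.head?_cons, Option.mem_some_iff] at hy
    subst hx; subst hy
    exact ha.symm
  · rw [List.nodup_append]
    refine ⟨hc'.2.2.1, by simp, fun x hx => ?_⟩
    simp only [List.mem_singleton]
    rintro _ rfl rfl
    exact hv (hperm.mem_iff.1 hx)

lemma cycle_spans (hn : 3 ≤ Fintype.card V)
    (hdeg : ∀ x y : V, x ≠ y → ¬ G.Adj x y →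
      Fintype.card V ≤ G.degree x + G.degree y) {k : ℕ}
    (hmax : ∀ l : List V, l.Chain' G.Adj → l.Nodup → l.length ≤ k)
    {c : List V} (hc : IsCycleList G c) (hk : c.length = k)
    {a : V} (ha : a ∈ c) (hN : ∀ w, G.Adj a w → w ∈ c) (v : V) : v ∈ c := by
  by_contra hv
  by_cases hadj : ∃ w ∈ c, G.Adj v w
  · obtain ⟨w, hw, hvw⟩ := hadj
    obtain ⟨l, hl1, hl2, hl3⟩ := cycle_extend G hc hv hw hvw
    have := hmax l hl1 hl2
    omega
  · push_neg at hadj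
    have hva : v ≠ a := fun h => hv (h ▸ ha)
    have hnadj : ¬ G.Adj v a := hadj a ha
    have hd := hdeg v a hva hnadj
    have h1 : G.neighborFinset a ⊆ c.toFinset.erase a := by
      intro w hw
      rw [SimpleGraph.mem_neighborFinset] at hw
      exact Finset.mem_erase.2 ⟨(G.ne_of_adj hw).symm, List.mem_toFinset.2 (hN w hw)⟩
    have h2 : G.neighborFinset v ⊆ (Finset.univ \ c.toFinset).erase v := by
      intro w hw
      rw [SimpleGraph.mem_neighborFinset] at hw
      refine Finset.mem_erase.2 ⟨(G.ne_of_adj hw).symm, ?_⟩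
      rw [Finset.mem_sdiff]
      exact ⟨Finset.mem_univ _, fun hwc => hadj w (List.mem_toFinset.1 hwc) hw⟩
    have hcard : c.toFinset.card = k := by
      rw [List.toFinset_card_of_nodup hc.2.2.1, hk]
    have hb1 : G.degree a ≤ k - 1 := by
      have := Finset.card_le_card h1
      rw [Finset.card_erase_of_mem (List.mem_toFinset.2 ha), hcard] at this
      rwa [SimpleGraph.card_neighborFinset_eq_degree] at this
    have hb2 : G.degree v ≤ Fintype.card V - k - 1 := by
      have h3 := Finset.card_le_card h2
      rw [Finset.card_erase_of_mem (by
        rw [Finset.mem_sdiff]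
        exact ⟨Finset.mem_univ _, fun hvc => hv (List.mem_toFinset.1 hvc)⟩),
        Finset.card_sdiff_of_subset (Finset.subset_univ _), hcard, Finset.card_univ] at h3
      rwa [SimpleGraph.card_neighborFinset_eq_degree] at h3
    have hk1 : 1 ≤ k := by
      have := hc.1
      have : 0 < c.length := List.length_pos_iff.2 hc.1
      omega
    have hkn : k + 1 ≤ Fintype.card V := by
      have hsub : c.toFinset ⊆ Finset.univ.erase v := fun x hx =>
        Finset.mem_erase.2 ⟨fun h => hv (h ▸ List.mem_toFinset.1 hx), Finset.mem_univ _⟩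
      have := Finset.card_le_card hsub
      rw [hcard, Finset.card_erase_of_mem (Finset.mem_univ _), Finset.card_univ] at this
      omega
    omega

lemma cycleList_hamiltonian {c : List V} (hc : IsCycleList G c)
    (hall : ∀ v : V, v ∈ c) (hn : 3 ≤ Fintype.card V) :
    ∃ a, ∃ p : G.Walk a a, p.IsHamiltonianCycle := by
  obtain ⟨hne, hch, hnd, hcl⟩ := hc
  have huniv : c.toFinset = Finset.univ :=
    Finset.eq_univ_iff_forall.2 fun v => List.mem_toFinset.2 (hall v)
  have hlen : c.length = Fintype.card V := by
    rw [← List.toFinset_card_of_nodup hnd, huniv, Finset.card_univ]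
  match c, hne, hch, hnd, hcl, hall, hlen with
  | [v0], _, _, _, _, _, hlen => simp at hlen; omega
  | [v0, v1], _, _, _, _, _, hlen => simp at hlen; omega
  | v0 :: v1 :: v2 :: t, hne, hch, hnd, hcl, hall, hlen =>
    set rest := v2 :: t with hrest
    -- chain for the closed walk
    have hchapp : List.Chain' G.Adj ((v0 :: v1 :: rest) ++ [v0]) := by
      refine List.isChain_append.2 ⟨hch, List.isChain_singleton v0, ?_⟩
      intro x hx y hy
      simp only [List.head?_cons, Option.mem_some_iff] at hy
      subst hy
      exact hcl x hx v0 (by simp)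
    have hadj01 : G.Adj v0 v1 := (List.isChain_cons_cons.1 hch).1
    have hchain2 : List.Chain G.Adj v1 (rest ++ [v0]) := by
      have h1 : List.Chain G.Adj v0 (v1 :: (rest ++ [v0])) := hchapp
      exact (List.chain_cons.1 h1).2
    set q := OreMkWalk G v1 v0 rest hchain2 with hq
    have hqsupp : q.support = v1 :: (rest ++ [v0]) := OreMkWalk_support G v1 v0 rest hchain2
    have hqnd : q.support.Nodup := by
      rw [hqsupp]
      simp only [List.nodup_cons, List.mem_cons] at hnd
      rw [List.nodup_cons, List.nodup_append]
      refine ⟨?_, hnd.2.2, by simp, ?_⟩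
      · rw [List.mem_append]
        rintro (h | h)
        · exact hnd.2.1 h
        · simp only [List.mem_singleton] at h
          exact hnd.1 (Or.inl h.symm)
      · intro x hx
        simp only [List.mem_singleton]
        rintro _ rfl rfl
        exact hnd.1 (Or.inr hx)
    have hqpath : q.IsPath := SimpleGraph.Walk.IsPath.mk' hqnd
    have hqlen : 2 ≤ q.length := by
      rw [OreMkWalk_length]
      simp [hrest]
    set p := SimpleGraph.Walk.cons hadj01 q with hp
    refine ⟨v0, p, ?_, ?_⟩
    · exact (SimpleGraph.Walk.cons_isCycle_iff q hadj01).2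
        ⟨hqpath, no_closing_edge G q hqnd hqlen⟩
    · -- isHamiltonian_tail
      intro w
      have hpnil : ¬ p.Nil := SimpleGraph.Walk.not_nil_cons
      rw [SimpleGraph.Walk.support_tail_of_not_nil p hpnil]
      have : p.support = v0 :: q.support := SimpleGraph.Walk.support_cons _ _
      rw [this, List.tail_cons, hqsupp]
      apply List.count_eq_one_of_mem
      · rw [← hqsupp]; exact hqnd
      · have := hall w
        simp only [List.mem_cons, List.mem_append, List.mem_singleton] at this ⊢
        tauto

lemma idx_helper {α : Type} [DecidableEq α] {l : List α} {w : α} {i : ℕ}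
    (h : l.idxOf w = i) (hi : i < l.length) : l[i] = w := by
  subst h; exact List.getElem_idxOf hi

lemma exists_crossover {l : List V} (h0 : l ≠ []) (hnd : l.Nodup) (hk : 2 ≤ l.length)
    (hNa : ∀ w, G.Adj (l.head h0) w → w ∈ l)
    (hNb : ∀ w, G.Adj (l.getLast h0) w → w ∈ l)
    (hnab : ¬ G.Adj (l.head h0) (l.getLast h0))
    (hdeg : Fintype.card V ≤ G.degree (l.head h0) + G.degree (l.getLast h0)) :
    ∃ i, ∃ (hi : i + 1 < l.length), G.Adj (l.head h0) (l[i+1]'hi) ∧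
      G.Adj (l.getLast h0) (l[i]'(by omega)) := by
  set a := l.head h0 with ha
  set b := l.getLast h0 with hb
  set k := l.length with hkdef
  have hkn : k ≤ Fintype.card V := hnd.length_le_card
  have hl0 : l[0]'(by omega) = a := (List.getElem_zero _).symm ▸ (List.head_eq_getElem_zero h0).symm
  have hlk : l[k-1]'(by omega) = b := (List.getLast_eq_getElem h0).symm
  -- index facts for neighbors of a
  have haidx : ∀ w ∈ G.neighborFinset a, 1 ≤ l.idxOf w ∧ l.idxOf w < k := by
    intro w hw
    rw [SimpleGraph.mem_neighborFinset] at hw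
    have hmem : w ∈ l := hNa w hw
    have hlt : l.idxOf w < k := List.idxOf_lt_length_iff.2 hmem
    refine ⟨?_, hlt⟩
    by_contra h
    have h00 : l.idxOf w = 0 := by omega
    have : w = a := by rw [← idx_helper h00 (by omega), hl0]
    exact G.ne_of_adj hw this.symm
  have hbidx : ∀ w ∈ G.neighborFinset b, l.idxOf w < k - 1 := by
    intro w hw
    rw [SimpleGraph.mem_neighborFinset] at hw
    have hmem : w ∈ l := hNb w hw
    have hlt : l.idxOf w < k := List.idxOf_lt_length_iff.2 hmem
    have hne : l.idxOf w ≠ k - 1 := by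
      intro h
      have : w = b := by rw [← idx_helper h (by omega), hlk]
      exact G.ne_of_adj hw this.symm
    omega
  set S := (G.neighborFinset a).image (fun w => l.idxOf w - 1) with hS
  set T := (G.neighborFinset b).image (fun w => l.idxOf w) with hT
  have hinj : Set.InjOn (fun w => l.idxOf w) {w | w ∈ l} := by
    intro x hx y hy hxy
    have hx' : l.idxOf x < k := List.idxOf_lt_length_iff.2 hx
    have hy' : l.idxOf y < k := List.idxOf_lt_length_iff.2 hy
    rw [← List.getElem_idxOf hx', ← List.getElem_idxOf hy']
    simp_rw [hxy]
  have hcardS : S.card = G.degree a := by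
    rw [hS, Finset.card_image_of_injOn, SimpleGraph.card_neighborFinset_eq_degree]
    intro x hx y hy hxy
    have hx1 := haidx x hx
    have hy1 := haidx y hy
    have : l.idxOf x = l.idxOf y := by simp only at hxy; omega
    exact hinj (hNa x (by rwa [← SimpleGraph.mem_neighborFinset])) 
      (hNa y (by rwa [← SimpleGraph.mem_neighborFinset])) this
  have hcardT : T.card = G.degree b := by
    rw [hT, Finset.card_image_of_injOn, SimpleGraph.card_neighborFinset_eq_degree]
    intro x hx y hy hxy
    exact hinj (hNb x (by rwa [← SimpleGraph.mem_neighborFinset]))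
      (hNb y (by rwa [← SimpleGraph.mem_neighborFinset])) hxy
  have hSsub : S ⊆ Finset.range (k-1) := by
    intro i hi
    rw [hS, Finset.mem_image] at hi
    obtain ⟨w, hw, rfl⟩ := hi
    have := haidx w hw
    rw [Finset.mem_range]
    omega
  have hTsub : T ⊆ Finset.range (k-1) := by
    intro i hi
    rw [hT, Finset.mem_image] at hi
    obtain ⟨w, hw, rfl⟩ := hi
    rw [Finset.mem_range]
    exact hbidx w hw
  have hinter : (S ∩ T).Nonempty := by
    rw [← Finset.card_pos]
    have h1 := Finset.card_union_add_card_inter S T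
    have h2 : (S ∪ T).card ≤ k - 1 := by
      have := Finset.card_le_card (Finset.union_subset hSsub hTsub)
      simpa using this
    omega
  obtain ⟨i, hi⟩ := hinter
  rw [Finset.mem_inter, hS, hT, Finset.mem_image, Finset.mem_image] at hi
  obtain ⟨⟨w1, hw1, hw1i⟩, ⟨w2, hw2, hw2i⟩⟩ := hi
  have h1 := haidx w1 hw1
  have hiw1 : l.idxOf w1 = i + 1 := by omega
  have h2 := hbidx w2 hw2
  have hik : i + 1 < k := by omega
  refine ⟨i, hik, ?_, ?_⟩
  · rw [SimpleGraph.mem_neighborFinset] at hw1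
    rwa [idx_helper hiw1 (by omega)]
  · rw [SimpleGraph.mem_neighborFinset] at hw2
    rwa [idx_helper hw2i (by omega)]

lemma crossover_cycle {l : List V} (h0 : l ≠ []) (hch : l.Chain' G.Adj) (hnd : l.Nodup)
    {i : ℕ} (hi : i + 1 < l.length)
    (ha : G.Adj (l.head h0) (l[i+1]'hi))
    (hb : G.Adj (l.getLast h0) (l[i]'(by omega))) :
    IsCycleList G (l.take (i+1) ++ (l.drop (i+1)).reverse) ∧
      (l.take (i+1) ++ (l.drop (i+1)).reverse) ~ l ∧
      (l.take (i+1) ++ (l.drop (i+1)).reverse).head? = some (l.head h0) := by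
  have hperm : (l.take (i+1) ++ (l.drop (i+1)).reverse) ~ l := by
    calc l.take (i+1) ++ (l.drop (i+1)).reverse
        ~ l.take (i+1) ++ l.drop (i+1) := List.Perm.append_left _ (List.reverse_perm _)
      _ = l := List.take_append_drop _ _
  have htake_ne : l.take (i+1) ≠ [] := by
    have : (l.take (i+1)).length = i + 1 := by
      rw [List.length_take]; omega
    intro h; rw [h] at this; simp at this
  have hdrop_ne : l.drop (i+1) ≠ [] := by
    have : (l.drop (i+1)).length = l.length - (i+1) := List.length_drop
    intro h; rw [h] at this; simp at this; omega
  have htake_last : (l.take (i+1)).getLast? = some (l[i]'(by omega)) := by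
    rw [List.getLast?_eq_getElem?]
    rw [List.length_take]
    have hmin : min (i+1) l.length - 1 = i := by omega
    rw [hmin, List.getElem?_take_of_lt (by omega), List.getElem?_eq_getElem (by omega)]
  have hdrop_head : (l.drop (i+1)).head? = some (l[i+1]'hi) := by
    rw [List.drop_eq_getElem_cons hi]
    simp
  have hdrop_last : (l.drop (i+1)).getLast? = some (l.getLast h0) := by
    conv_rhs => rw [← List.getLast?_eq_getLast h0, ← List.take_append_drop (i+1) l]
    rw [List.getLast?_append_of_ne_nil _ hdrop_ne]
  have hhead : (l.take (i+1) ++ (l.drop (i+1)).reverse).head? = some (l.head h0) := by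
    rw [List.head?_eq_getElem?]
    rw [List.getElem?_append_left (by rw [List.length_take]; omega)]
    rw [List.getElem?_take_of_lt (by omega), ← List.head?_eq_getElem?,
      List.head?_eq_head h0]
  refine ⟨⟨by simp [htake_ne], ?_, hperm.nodup_iff.2 hnd, ?_⟩, hperm, hhead⟩
  · refine List.isChain_append.2 ⟨hch.take _, ?_, ?_⟩
    · exact List.isChain_reverse.2 ((hch.drop _).imp fun a b h => h.symm)
    · intro x hx y hy
      rw [htake_last, Option.mem_some_iff] at hx
      rw [List.head?_reverse, hdrop_last, Option.mem_some_iff] at hy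
      subst hx; subst hy
      exact hb.symm
  · intro x hx y hy
    rw [List.getLast?_append_of_ne_nil _ (by simp [hdrop_ne]),
      List.getLast?_reverse, hdrop_head, Option.mem_some_iff] at hx
    rw [hhead, Option.mem_some_iff] at hy
    subst hx; subst hy
    exact ha.symm


end OreAux


/-- Ore's theorem: a simple graph of order n ≥ 3 in which any
two non-adjacent vertices have degree sum at least n is Hamiltonian. -/
theorem statement_18 {V : Type} [Fintype V] [DecidableEq V]
    (G : SimpleGraph V) [DecidableRel G.Adj]
    (hn : 3 ≤ Fintype.card V)
    (hdeg : ∀ x y : V, x ≠ y → ¬ G.Adj x y →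
      Fintype.card V ≤ G.degree x + G.degree y) :
    G.IsHamiltonian := by
  intro _
  classical
  have hnV : Nonempty V := Fintype.card_pos_iff.1 (by omega)
  set P : ℕ → Prop := fun m => ∃ l : List V, l.Chain' G.Adj ∧ l.Nodup ∧ l.length = m with hP
  haveI : DecidablePred P := Classical.decPred P
  set n := Fintype.card V with hnn
  set k := Nat.findGreatest P n with hkdef
  have hbound : ∀ m, P m → m ≤ n := by
    rintro m ⟨l, _, hnd, hlen⟩
    exact hlen ▸ hnd.length_le_card
  have hP1 : P 1 := ⟨[Classical.arbitrary V], List.isChain_singleton _, by simp, rfl⟩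
  have hk1 : 1 ≤ k := Nat.le_findGreatest (by omega) hP1
  have hPk : P k := Nat.findGreatest_spec (P := P) (by omega : 1 ≤ n) hP1
  have hmax : ∀ l : List V, l.Chain' G.Adj → l.Nodup → l.length ≤ k := by
    intro l hc hnd
    by_contra h
    push_neg at h
    exact Nat.findGreatest_is_greatest h (hbound _ ⟨l, hc, hnd, rfl⟩) ⟨l, hc, hnd, rfl⟩
  obtain ⟨l, hch, hnd, hlen⟩ := hPk
  have h0 : l ≠ [] := by
    intro h; rw [h] at hlen; simp at hlen; omega
  set a := l.head h0 with ha
  set b := l.getLast h0 with hb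
  have hNa : ∀ w, G.Adj a w → w ∈ l := by
    intro w hw
    by_contra hwl
    have h1 : (w :: l).Chain' G.Adj :=
      List.isChain_cons.2 ⟨fun y hy => by rw [List.head?_eq_head h0, Option.mem_some_iff] at hy; exact hy ▸ hw.symm, hch⟩
    have h2 : (w :: l).Nodup := List.nodup_cons.2 ⟨hwl, hnd⟩
    have := hmax _ h1 h2
    simp [hlen] at this
  have hNb : ∀ w, G.Adj b w → w ∈ l := by
    intro w hw
    by_contra hwl
    have h1 : (l ++ [w]).Chain' G.Adj := by
      refine List.isChain_append.2 ⟨hch, List.isChain_singleton w, ?_⟩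
      intro x hx y hy
      rw [List.getLast?_eq_getLast h0, Option.mem_some_iff] at hx
      simp only [List.head?_cons, Option.mem_some_iff] at hy
      subst hx; subst hy
      exact hw
    have h2 : (l ++ [w]).Nodup := by
      rw [List.nodup_append]
      exact ⟨hnd, by simp, fun x hx => by simp only [List.mem_singleton]; rintro _ rfl rfl; exact hwl hx⟩
    have := hmax _ h1 h2
    simp [hlen] at this
  have hk2 : 2 ≤ k := by
    by_contra hklt
    have hk1' : k = 1 := by omega
    have hdega : G.degree a = 0 := by
      rw [← SimpleGraph.card_neighborFinset_eq_degree, Finset.card_eq_zero]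
      rw [Finset.eq_empty_iff_forall_notMem]
      intro w hw
      rw [SimpleGraph.mem_neighborFinset] at hw
      have hwl := hNa w hw
      have : l.length = 1 := by omega
      obtain ⟨z, hz⟩ := List.length_eq_one_iff.1 this
      have hal : a ∈ l := List.head_mem h0
      rw [hz] at hwl hal
      simp at hwl hal
      exact G.ne_of_adj hw (hwl.trans hal.symm).symm
    obtain ⟨x, hx⟩ := Fintype.exists_ne_of_one_lt_card (by omega) a
    have hnadj : ¬ G.Adj a x := by
      intro hadj
      have hwl := hNa x hadj
      have : l.length = 1 := by omega
      obtain ⟨z, hz⟩ := List.length_eq_one_iff.1 this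
      have hal : a ∈ l := List.head_mem h0
      rw [hz] at hwl hal
      simp at hwl hal
      exact hx (hwl.trans hal.symm)
    have := hdeg a x (Ne.symm hx) hnadj
    have := G.degree_lt_card_verts x
    omega
  have hab : a ≠ b := by
    intro h
    have h1 : l[0]'(by omega) = a := (List.head_eq_getElem_zero h0).symm
    have h2 : l[l.length - 1]'(by omega) = b := (List.getLast_eq_getElem h0).symm
    have e : l[0]'(by omega) = l[l.length-1]'(by omega) := by rw [h1, h2, h]
    have := hnd.getElem_inj_iff.mp e
    omega
  by_cases hadj : G.Adj b a
  · have hc : IsCycleList G l := by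
      refine ⟨h0, hch, hnd, ?_⟩
      intro x hx y hy
      rw [List.getLast?_eq_getLast h0, Option.mem_some_iff] at hx
      rw [List.head?_eq_head h0, Option.mem_some_iff] at hy
      subst hx; subst hy
      exact hadj
    have hall : ∀ v : V, v ∈ l :=
      cycle_spans G hn hdeg hmax hc hlen (List.head_mem h0) hNa
    exact cycleList_hamiltonian G hc hall hn
  · have hnab : ¬ G.Adj a b := fun h => hadj h.symm
    have hdeg' : Fintype.card V ≤ G.degree a + G.degree b := hdeg a b hab hnab
    obtain ⟨i, hi, hia, hib⟩ :=
      exists_crossover G h0 hnd (by omega) hNa hNb hnab hdeg'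
    obtain ⟨hcyc, hperm, hhead⟩ := crossover_cycle G h0 hch hnd hi hia hib
    set c := l.take (i+1) ++ (l.drop (i+1)).reverse with hc
    have hamem : a ∈ c := List.mem_of_mem_head? (by rw [hhead]; rfl)
    have hNc : ∀ w, G.Adj a w → w ∈ c := fun w hw => hperm.mem_iff.2 (hNa w hw)
    have hlenc : c.length = k := by rw [hperm.length_eq, hlen]
    have hall : ∀ v : V, v ∈ c :=
      cycle_spans G hn hdeg hmax hcyc hlenc hamem hNc
    exact cycleList_hamiltonian G hcyc hall hn
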